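/- arXiv:2503.01282 — 2 statements merged into one kernel-verified Lean document; each statement's English description precedes it below -/
import Mathlib

section
/- Corollary (time-invariant steady-state case). Under the hypotheses of Theorem 1, if additionally the matrices P_k are constant, i.e., P_k⁻¹ = P_0⁻¹ for all k ≥ 0 (as happens for the steady-state Kalman filter with C_k ≡ C_0), then assumption A2 holds with M = 0, and consequently the regret bounds hold with M = 0: R_f(N) ≤ (√N · D_ν)/2 + G_f D_x √N / √(2α) + G_f √N D_x / √(2α) and R_c(N) ≤ 2F√N + D_ν + (2G_f D_x) / √(2α), for η = G_f √N / (D_x √(2α)) and ρ = √N. -/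
open Finset Matrix
open scoped RealInnerProductSpace

/-- Action of a matrix on a Euclidean vector. -/
noncomputable def act {ι κ : Type*} [Fintype ι] [Fintype κ] (A : Matrix ι κ ℝ)
    (v : EuclideanSpace ℝ κ) : EuclideanSpace ℝ ι :=
  WithLp.toLp 2 (A.mulVec v)

/-- Weighted squared norm `‖v‖²_M = vᵀ M v`. -/
noncomputable def qnorm {ι : Type*} [Fintype ι] (M : Matrix ι ι ℝ)
    (v : EuclideanSpace ℝ ι) : ℝ :=
  ⟪v, act M v⟫

section helpers
variable {ι κ : Type*} [Fintype ι] [Fintype κ]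

lemma act_add (A : Matrix ι κ ℝ) (u v : EuclideanSpace ℝ κ) :
    act A (u + v) = act A u + act A v := by
  ext i
  simp [act, Matrix.mulVec, dotProduct, mul_add, Finset.sum_add_distrib]

lemma act_smul (A : Matrix ι κ ℝ) (t : ℝ) (v : EuclideanSpace ℝ κ) :
    act A (t • v) = t • act A v := by
  ext i
  simp [act, Matrix.mulVec, dotProduct, Finset.mul_sum]
  exact Finset.sum_congr rfl fun j _ => by ring

lemma act_sub (A : Matrix ι κ ℝ) (u v : EuclideanSpace ℝ κ) :
    act A (u - v) = act A u - act A v := by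
  ext i
  simp [act, Matrix.mulVec, dotProduct, mul_sub, Finset.sum_sub_distrib]

lemma inner_act (A : Matrix ι κ ℝ) (u : EuclideanSpace ℝ ι) (v : EuclideanSpace ℝ κ) :
    ⟪u, act A v⟫ = ⟪act Aᵀ u, v⟫ := by
  simp only [act, PiLp.inner_apply, RCLike.inner_apply, conj_trivial, Matrix.mulVec,
    dotProduct, Matrix.transpose_apply, Finset.mul_sum, Finset.sum_mul]
  rw [Finset.sum_comm]
  exact Finset.sum_congr rfl fun i _ => Finset.sum_congr rfl fun j _ => by ring

lemma qnorm_nonneg {M : Matrix ι ι ℝ} (hM : M.PosSemidef) (v : EuclideanSpace ℝ ι) :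
    0 ≤ qnorm M v := by
  have := hM.dotProduct_mulVec_nonneg v
  simpa [qnorm, act, PiLp.inner_apply, RCLike.inner_apply, dotProduct, mul_comm] using this

lemma qnorm_zero (v : EuclideanSpace ℝ ι) : qnorm (0 : Matrix ι ι ℝ) v = 0 := by
  have : act (0 : Matrix ι ι ℝ) v = 0 := by
    ext i; simp [act]
  simp [qnorm, this]

lemma act_act {κ' : Type*} [Fintype κ'] (A : Matrix ι κ ℝ) (B : Matrix κ κ' ℝ)
    (v : EuclideanSpace ℝ κ') :
    act (A * B) v = act A (act B v) := by
  ext i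
  simp [act, ← Matrix.mulVec_mulVec]

lemma inner_act_symm {M : Matrix ι ι ℝ} (hM : Mᵀ = M) (u v : EuclideanSpace ℝ ι) :
    ⟪u, act M v⟫ = ⟪v, act M u⟫ := by
  rw [inner_act, hM, real_inner_comm]

lemma qnorm_expand {M : Matrix ι ι ℝ} (hM : Mᵀ = M) (u v : EuclideanSpace ℝ ι) (t : ℝ) :
    qnorm M (u + t • v) = qnorm M u + 2 * t * ⟪v, act M u⟫ + t ^ 2 * qnorm M v := by
  rw [qnorm, act_add, act_smul, inner_add_left, inner_add_right, inner_add_right,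
    real_inner_smul_left, real_inner_smul_left, real_inner_smul_right,
    real_inner_smul_right, inner_act_symm hM u v]
  rw [qnorm, qnorm]; ring

lemma norm_expand {E : Type*} [NormedAddCommGroup E] [InnerProductSpace ℝ E]
    (u v : E) (t : ℝ) :
    ‖u + t • v‖ ^ 2 = ‖u‖ ^ 2 + 2 * t * ⟪u, v⟫ + t ^ 2 * ‖v‖ ^ 2 := by
  rw [norm_add_sq_real, real_inner_smul_right, norm_smul]
  simp [mul_pow]; ring

lemma lin_nonneg (a b : ℝ) (h : ∀ t : ℝ, t ∈ Set.Ioc (0:ℝ) 1 → 0 ≤ a * t + b * t ^ 2) :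
    0 ≤ a := by
  by_contra hca
  push_neg at hca
  have hb : 0 < b := by
    have := h 1 ⟨one_pos, le_refl 1⟩
    nlinarith
  set t := min 1 (-a / (2 * b)) with ht
  have ht0 : 0 < t := lt_min one_pos (div_pos (by linarith) (by linarith))
  have ht1 : t ≤ 1 := min_le_left _ _
  have htb : b * t ≤ -a / 2 := by
    have : t ≤ -a / (2 * b) := min_le_right _ _
    calc b * t ≤ b * (-a / (2 * b)) := by nlinarith
    _ = -a / 2 := by field_simp
  have := h t ⟨ht0, ht1⟩
  nlinarith

end helpers

lemma xstep {n m : ℕ} (C : Matrix (Fin m) (Fin n) ℝ) (R : Matrix (Fin m) (Fin m) ℝ)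
    (hRt : Rᵀ = R) (hRpsd : R.PosSemidef)
    (P : Matrix (Fin n) (Fin n) ℝ) (hPt : Pᵀ = P)
    (y : EuclideanSpace ℝ (Fin m)) (ρ η : ℝ)
    (f : EuclideanSpace ℝ (Fin n) → ℝ)
    (hf : ∀ x', f x' = (1/2) * qnorm R (y - act C x'))
    (X ν0 xk w : EuclideanSpace ℝ (Fin n))
    (hmin : ∀ z, f X + ⟪w, X - ν0⟫ + ρ/2 * ‖X - ν0‖^2 + η/2 * qnorm P (X - xk)
      ≤ f z + ⟪w, z - ν0⟫ + ρ/2 * ‖z - ν0‖^2 + η/2 * qnorm P (z - xk))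
    (z : EuclideanSpace ℝ (Fin n)) :
    f X + ⟪w, X - ν0⟫ + ρ/2 * ‖X - ν0‖^2 + η/2 * qnorm P (X - xk)
      + ρ/2 * ‖z - X‖^2 + η/2 * qnorm P (z - X)
    ≤ f z + ⟪w, z - ν0⟫ + ρ/2 * ‖z - ν0‖^2 + η/2 * qnorm P (z - xk) := by
  set d : EuclideanSpace ℝ (Fin n) := z - X with hd
  set a : ℝ := -⟪act C d, act R (y - act C X)⟫ + ⟪w, d⟫ + ρ * ⟪X - ν0, d⟫
      + η * ⟪d, act P (X - xk)⟫ with ha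
  set b : ℝ := 1/2 * qnorm R (act C d) + ρ/2 * ‖d‖^2 + η/2 * qnorm P d with hb
  have expand : ∀ t : ℝ,
      f (X + t • d) + ⟪w, X + t • d - ν0⟫ + ρ/2 * ‖X + t • d - ν0‖^2
        + η/2 * qnorm P (X + t • d - xk)
      = (f X + ⟪w, X - ν0⟫ + ρ/2 * ‖X - ν0‖^2 + η/2 * qnorm P (X - xk))
        + a * t + b * t ^ 2 := by
    intro t
    have e1 : X + t • d - ν0 = (X - ν0) + t • d := by module
    have e2 : X + t • d - xk = (X - xk) + t • d := by module
    have e3 : y - act C (X + t • d) = (y - act C X) + (-t) • act C d := by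
      rw [act_add, act_smul]; module
    rw [hf (X + t • d), hf X, e1, e2, e3, qnorm_expand hRt, qnorm_expand hPt,
      norm_expand, inner_add_right, real_inner_smul_right, ha, hb]
    ring
  clear_value a b
  have hab : ∀ t : ℝ, t ∈ Set.Ioc (0:ℝ) 1 → 0 ≤ a * t + b * t ^ 2 := by
    intro t _
    have h1 := hmin (X + t • d)
    rw [expand t] at h1
    linarith
  have hA : 0 ≤ a := lin_nonneg a b hab
  have h1 := expand 1
  rw [one_smul, show X + d = z by module] at h1
  have hq : 0 ≤ qnorm R (act C d) := qnorm_nonneg hRpsd _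
  have hgoal1 : ‖z - X‖ ^ 2 = ‖d‖ ^ 2 := by rw [hd]
  have hgoal2 : qnorm P (z - X) = qnorm P d := by rw [hd]
  rw [hgoal1, hgoal2]
  nlinarith [h1]

lemma nustep {n : ℕ} (g : EuclideanSpace ℝ (Fin n) → ℝ) (hg : ConvexOn ℝ Set.univ g)
    (ρ : ℝ) (X V w : EuclideanSpace ℝ (Fin n))
    (hmin : ∀ z, g V + ⟪w, X - V⟫ + ρ/2 * ‖X - V‖^2
      ≤ g z + ⟪w, X - z⟫ + ρ/2 * ‖X - z‖^2)
    (z : EuclideanSpace ℝ (Fin n)) :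
    g V + ⟪w, X - V⟫ + ρ/2 * ‖X - V‖^2 + ρ/2 * ‖z - V‖^2
      ≤ g z + ⟪w, X - z⟫ + ρ/2 * ‖X - z‖^2 := by
  set d : EuclideanSpace ℝ (Fin n) := z - V with hd
  set A : ℝ := (g z - g V) - ⟪w, d⟫ - ρ * ⟪X - V, d⟫ with hA
  set B : ℝ := ρ/2 * ‖d‖^2 with hB
  clear_value A B
  have hab : ∀ t : ℝ, t ∈ Set.Ioc (0:ℝ) 1 → 0 ≤ A * t + B * t ^ 2 := by
    intro t ht
    have hgc := hg.2 (Set.mem_univ V) (Set.mem_univ z)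
      (by linarith [ht.2] : (0:ℝ) ≤ 1 - t) (le_of_lt ht.1) (by ring)
    rw [show (1 - t) • V + t • z = V + t • d by module] at hgc
    have h1 := hmin (V + t • d)
    have e1 : X - (V + t • d) = (X - V) + (-t) • d := by module
    rw [e1, norm_expand, inner_add_right, real_inner_smul_right] at h1
    rw [smul_eq_mul, smul_eq_mul] at hgc
    rw [hA, hB]
    nlinarith [h1, hgc]
  have hA0 : 0 ≤ A := lin_nonneg A B hab
  have e2 : X - z = (X - V) + (-1 : ℝ) • d := by module
  rw [e2, norm_expand, inner_add_right, real_inner_smul_right, hB]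
  rw [hA] at hA0
  linarith [hA0]

lemma act_neg {ι κ : Type*} [Fintype ι] [Fintype κ] (A : Matrix ι κ ℝ)
    (v : EuclideanSpace ℝ κ) : act A (-v) = -act A v := by
  ext i
  simp [act, Matrix.mulVec, dotProduct, mul_neg, Finset.sum_neg_distrib]

lemma gradstep {n m : ℕ} (C : Matrix (Fin m) (Fin n) ℝ) (R : Matrix (Fin m) (Fin m) ℝ)
    (hRt : Rᵀ = R) (hRpsd : R.PosSemidef)
    (y : EuclideanSpace ℝ (Fin m))
    (f : EuclideanSpace ℝ (Fin n) → ℝ)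
    (hf : ∀ x', f x' = (1/2) * qnorm R (y - act C x'))
    (xk X : EuclideanSpace ℝ (Fin n)) (Gf : ℝ)
    (hGb : ‖act (Cᵀ * R) (act C xk - y)‖ ^ 2 ≤ Gf ^ 2) (hGf : 0 < Gf)
    (η α : ℝ) (hη : 0 < η) (hα : 0 < α)
    (P : Matrix (Fin n) (Fin n) ℝ)
    (hPq : α * ‖X - xk‖^2 ≤ qnorm P (X - xk)) :
    f xk ≤ f X + Gf ^ 2 / (2 * η * α) + η / 2 * qnorm P (X - xk) := by
  have e : y - act C X = (y - act C xk) + (-1 : ℝ) • act C (X - xk) := by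
    rw [act_sub]; module
  have hfX : f X = f xk - ⟪act C (X - xk), act R (y - act C xk)⟫
      + 1/2 * qnorm R (act C (X - xk)) := by
    rw [hf X, hf xk, e, qnorm_expand hRt]; ring
  have hadj : ⟪act C (X - xk), act R (y - act C xk)⟫
      = -⟪act (Cᵀ * R) (act C xk - y), X - xk⟫ := by
    rw [real_inner_comm, inner_act, act_act]
    rw [show act C xk - y = -(y - act C xk) by module, act_neg, act_neg, inner_neg_left, neg_neg]
  have hq : 0 ≤ qnorm R (act C (X - xk)) := qnorm_nonneg hRpsd _
  set gk := act (Cᵀ * R) (act C xk - y) with hgk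
  set δ : EuclideanSpace ℝ (Fin n) := X - xk with hδ
  have hg1 : ‖gk‖ ≤ Gf := by nlinarith [norm_nonneg gk]
  have hinner : -⟪gk, δ⟫ ≤ Gf * ‖δ‖ := by
    have h1 := abs_real_inner_le_norm gk δ
    have h2 : ‖gk‖ * ‖δ‖ ≤ Gf * ‖δ‖ :=
      mul_le_mul_of_nonneg_right hg1 (norm_nonneg δ)
    have h3 : -⟪gk, δ⟫ ≤ |⟪gk, δ⟫| := neg_le_abs _
    linarith
  have hamgm : Gf * ‖δ‖ ≤ Gf ^ 2 / (2 * η * α) + (η * α / 2) * ‖δ‖ ^ 2 := by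
    have h2 : (0:ℝ) ≤ (Gf - η * α * ‖δ‖) ^ 2 := sq_nonneg _
    have h3 : (0:ℝ) < 2 * η * α := by positivity
    have h4 : Gf ^ 2 / (2 * η * α) + (η * α / 2) * ‖δ‖ ^ 2 - Gf * ‖δ‖
        = (Gf - η * α * ‖δ‖) ^ 2 / (2 * η * α) := by
      field_simp; ring
    have := div_nonneg h2 h3.le
    linarith
  have hP2 : (η / 2) * (α * ‖δ‖ ^ 2) ≤ (η / 2) * qnorm P δ :=
    mul_le_mul_of_nonneg_left hPq (by positivity)
  have hfin : (η * α / 2) * ‖δ‖ ^ 2 = (η / 2) * (α * ‖δ‖ ^ 2) := by ring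
  linarith [hfX, hadj, hq, hinner, hamgm, hP2]


set_option maxHeartbeats 2000000 in
/-- Corollary: in the time-invariant steady-state case (constant `P_k`), assumption A2 holds
with `M = 0`, and the regret bounds of Theorem 1 hold with `M = 0`. -/
theorem regret_bounds_constant_P {n m : ℕ} (N : ℕ)
    -- data of the losses `f_k(x) = ½‖y_k − C_k x‖²_{R_k⁻¹}`
    (C : ℕ → Matrix (Fin m) (Fin n) ℝ) (Rinv : ℕ → Matrix (Fin m) (Fin m) ℝ)
    (y : ℕ → EuclideanSpace ℝ (Fin m))
    (hR : ∀ k, (Rinv k).PosDef)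
    (f : ℕ → EuclideanSpace ℝ (Fin n) → ℝ)
    (hf : ∀ k x', f k x' = (1 / 2) * qnorm (Rinv k) (y k - act (C k) x'))
    -- proper convex regularizer
    (g : EuclideanSpace ℝ (Fin n) → ℝ) (hg : ConvexOn ℝ Set.univ g)
    -- the (inverses of the) covariance matrices, constant in time
    (Pinv : ℕ → Matrix (Fin n) (Fin n) ℝ) (hP : ∀ k, (Pinv k).PosDef)
    (hPconst : ∀ k, Pinv k = Pinv 0)
    (ρ η : ℝ)
    -- the online ADMM–EKF iterates
    (x ν w : ℕ → EuclideanSpace ℝ (Fin n))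
    (hν0 : ν 0 = x 0) (hw0 : w 0 = 0)
    (hxup : ∀ k, ∀ z : EuclideanSpace ℝ (Fin n),
      f k (x (k + 1)) + ⟪w k, x (k + 1) - ν k⟫ + ρ / 2 * ‖x (k + 1) - ν k‖ ^ 2
          + η / 2 * qnorm (Pinv k) (x (k + 1) - x k)
        ≤ f k z + ⟪w k, z - ν k⟫ + ρ / 2 * ‖z - ν k‖ ^ 2
          + η / 2 * qnorm (Pinv k) (z - x k))
    (hνup : ∀ k, ∀ z : EuclideanSpace ℝ (Fin n),
      g (ν (k + 1)) + ⟪w k, x (k + 1) - ν (k + 1)⟫ + ρ / 2 * ‖x (k + 1) - ν (k + 1)‖ ^ 2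
        ≤ g z + ⟪w k, x (k + 1) - z⟫ + ρ / 2 * ‖x (k + 1) - z‖ ^ 2)
    (hwup : ∀ k, w (k + 1) = w k + ρ • (x (k + 1) - ν (k + 1)))
    -- best solution in hindsight
    (xs νs : EuclideanSpace ℝ (Fin n)) (hfeas : xs = νs)
    (hopt : ∀ z : EuclideanSpace ℝ (Fin n),
      (∑ k ∈ range N, (f k xs + g νs)) ≤ ∑ k ∈ range N, (f k z + g z))
    -- assumption A1
    (α Gf Dx Dν F : ℝ) (hα : 0 < α) (hGf : 0 < Gf) (hDx : 0 < Dx) (hDν : 0 < Dν)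
    (hF : 0 < F)
    (hA1a : ∀ k, ∀ v : EuclideanSpace ℝ (Fin n), α * ‖v‖ ^ 2 ≤ qnorm (Pinv k) v)
    (hA1b : ∀ k, ‖act ((C k)ᵀ * Rinv k) (act (C k) (x k) - y k)‖ ^ 2 ≤ Gf ^ 2)
    (hA1c1 : ∀ k, (1 / 2) * qnorm (Pinv k) xs ≤ Dx ^ 2)
    (hA1c2 : ‖νs‖ ^ 2 ≤ Dν)
    (hA1d : ∀ k, -F ≤ f k (x (k + 1)) + g (ν (k + 1)) - (f k xs + g νs))
    -- assumption A3
    (hx0 : x 0 = 0) (hg0 : g 0 = 0) (hgnn : ∀ z, 0 ≤ g z)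
    -- tuned parameters
    (hη : η = Gf * Real.sqrt N / (Dx * Real.sqrt (2 * α)))
    (hρ : ρ = Real.sqrt N) :
    -- assumption A2 holds with `M = 0` (for every `k_n`), and the regret bounds hold with `M = 0`
    (∀ kn : ℕ,
      (1 / 2) * ∑ k ∈ Icc 1 kn, qnorm (Pinv k - Pinv (k - 1)) (xs - x k) ≤ 0) ∧
    ((∑ k ∈ range N, (f k (x k) + g (ν k))) - (∑ k ∈ range N, (f k xs + g νs))
      ≤ Real.sqrt N * Dν / 2 + Gf * Dx * Real.sqrt N / Real.sqrt (2 * α)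
        + Gf * Real.sqrt N * Dx / Real.sqrt (2 * α)) ∧
    ((∑ k ∈ range N, ‖x (k + 1) - ν k‖ ^ 2)
      ≤ 2 * F * Real.sqrt N + Dν + 2 * Gf * Dx / Real.sqrt (2 * α)) := by

  subst hfeas
  have hb0 : 0 < Real.sqrt (2 * α) := Real.sqrt_pos.mpr (by linarith)
  refine ⟨?_, ?_⟩
  · intro kn
    have hz : ∀ k ∈ Icc 1 kn, qnorm (Pinv k - Pinv (k - 1)) (xs - x k) = 0 := by
      intro k _
      rw [hPconst k, hPconst (k - 1), sub_self, qnorm_zero]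
    rw [Finset.sum_congr rfl hz]
    simp
  rcases Nat.eq_zero_or_pos N with h0 | hN1
  · subst h0
    simp only [range_zero, Finset.sum_empty, Nat.cast_zero, Real.sqrt_zero, sub_zero]
    constructor
    · simp
    · have h3 : (0:ℝ) < 2 * Gf * Dx := mul_pos (mul_pos two_pos hGf) hDx
      have h4 : (0:ℝ) < 2 * Gf * Dx / Real.sqrt (2 * α) := div_pos h3 hb0
      linarith
  -- main case N ≥ 1
  have hNr : (1:ℝ) ≤ (N:ℝ) := by exact_mod_cast hN1
  have hs0 : 0 < Real.sqrt N := Real.sqrt_pos.mpr (by linarith)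
  have hρ0 : 0 < ρ := by rw [hρ]; exact hs0
  have hη0 : 0 < η := by rw [hη]; exact div_pos (mul_pos hGf hs0) (mul_pos hDx hb0)
  have hsq : Real.sqrt N ^ 2 = (N:ℝ) := Real.sq_sqrt (by linarith)
  have hbsq : Real.sqrt (2 * α) ^ 2 = 2 * α := Real.sq_sqrt (by linarith)
  have hPt : (Pinv 0)ᵀ = Pinv 0 := by
    rw [← Matrix.conjTranspose_eq_transpose_of_trivial]; exact (hP 0).1
  have hRt : ∀ k, (Rinv k)ᵀ = Rinv k := fun k => by
    rw [← Matrix.conjTranspose_eq_transpose_of_trivial]; exact (hR k).1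
  have hPsd : (Pinv 0).PosSemidef := (hP 0).posSemidef
  -- per-step inequalities
  have key : ∀ k,
      (f k (x k) + g (ν (k + 1)) - (f k xs + g xs)
        ≤ 1/(2*ρ) * (‖w k‖^2 - ‖w (k+1)‖^2)
          + ρ/2 * (‖xs - ν k‖^2 - ‖xs - ν (k+1)‖^2)
          + η/2 * (qnorm (Pinv 0) (xs - x k) - qnorm (Pinv 0) (xs - x (k+1)))
          + Gf^2/(2*η*α) - ρ/2 * ‖x (k+1) - ν k‖^2) ∧
      (ρ/2 * ‖x (k+1) - ν k‖^2
        ≤ F + 1/(2*ρ) * (‖w k‖^2 - ‖w (k+1)‖^2)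
          + ρ/2 * (‖xs - ν k‖^2 - ‖xs - ν (k+1)‖^2)
          + η/2 * (qnorm (Pinv 0) (xs - x k) - qnorm (Pinv 0) (xs - x (k+1)))) := by
    intro k
    have hmin := hxup k
    simp only [hPconst k] at hmin
    have star_x := xstep (C k) (Rinv k) (hRt k) (hR k).posSemidef (Pinv 0) hPt (y k)
      ρ η (f k) (hf k) (x (k+1)) (ν k) (x k) (w k) hmin xs
    have star_ν := nustep g hg ρ (x (k+1)) (ν (k+1)) (w k) (hνup k) xs
    have hwn : ‖w (k+1)‖^2 = ‖w k‖^2 + 2*ρ*⟪w k, x (k+1) - ν (k+1)⟫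
        + ρ^2 * ‖x (k+1) - ν (k+1)‖^2 := by
      rw [hwup k, norm_add_sq_real, real_inner_smul_right, norm_smul, mul_pow,
        Real.norm_eq_abs, sq_abs]
      ring
    have wid : 1/(2*ρ) * (‖w k‖^2 - ‖w (k+1)‖^2)
        = -⟪w k, x (k+1) - ν (k+1)⟫ - ρ/2 * ‖x (k+1) - ν (k+1)‖^2 := by
      rw [hwn]; field_simp; ring
    have iid : ⟪w k, xs - ν k⟫ + ⟪w k, x (k+1) - xs⟫ - ⟪w k, x (k+1) - ν k⟫
        - ⟪w k, x (k+1) - ν (k+1)⟫ = ⟪w k, ν (k+1) - x (k+1)⟫ := by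
      simp only [inner_sub_right]; ring
    have hrev : ‖xs - x (k+1)‖^2 = ‖x (k+1) - xs‖^2 := by rw [norm_sub_rev]
    rw [hrev] at star_x
    have hq1 : 0 ≤ qnorm (Pinv 0) (x (k+1) - x k) := qnorm_nonneg hPsd _
    have hq1' : 0 ≤ η/2 * qnorm (Pinv 0) (x (k+1) - x k) := mul_nonneg (by linarith) hq1
    have hinw : ⟪w k, ν (k+1) - x (k+1)⟫ = -⟪w k, x (k+1) - ν (k+1)⟫ := by
      rw [show ν (k+1) - x (k+1) = -(x (k+1) - ν (k+1)) by module, inner_neg_right]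
    rw [hinw] at iid
    constructor
    · have grad := gradstep (C k) (Rinv k) (hRt k) (hR k).posSemidef (y k) (f k)
        (hf k) (x k) (x (k+1)) Gf (hA1b k) hGf η α hη0 hα (Pinv 0)
        (by have := hA1a k (x (k+1) - x k); rwa [hPconst k] at this)
      linarith [star_x, star_ν, wid, iid, grad]
    · have hd := hA1d k
      linarith [star_x, star_ν, wid, iid, hd, hq1']
  -- telescoping sums
  have T1 : ∀ (c : ℝ) (u : ℕ → ℝ),
      ∑ k ∈ range N, c * (u k - u (k+1)) = c * (u 0 - u N) := by
    intro c u
    rw [← Finset.mul_sum, Finset.sum_range_sub' u]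
  -- common bounds for the telescoped terms
  have hW0 : ‖w 0‖^2 = 0 := by rw [hw0]; simp
  have hV0 : ‖xs - ν 0‖^2 = ‖xs‖^2 := by rw [hν0, hx0]; simp
  have hQ0 : qnorm (Pinv 0) (xs - x 0) = qnorm (Pinv 0) xs := by rw [hx0]; simp
  have hQ0b : qnorm (Pinv 0) xs ≤ 2 * Dx^2 := by have := hA1c1 0; linarith
  have hQN : 0 ≤ qnorm (Pinv 0) (xs - x N) := qnorm_nonneg hPsd _
  have hVN : (0:ℝ) ≤ ‖xs - ν N‖^2 := by positivity
  have hWN : (0:ℝ) ≤ ‖w N‖^2 := by positivity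
  have b1 : 1/(2*ρ) * (‖w 0‖^2 - ‖w N‖^2) ≤ 0 := by
    rw [hW0, zero_sub, mul_neg]
    exact neg_nonpos_of_nonneg (mul_nonneg (div_nonneg zero_le_one (by linarith)) hWN)
  have b2 : ρ/2 * (‖xs - ν 0‖^2 - ‖xs - ν N‖^2) ≤ ρ/2 * Dν := by
    have h : ‖xs - ν 0‖^2 - ‖xs - ν N‖^2 ≤ Dν := by rw [hV0]; linarith [hA1c2]
    exact mul_le_mul_of_nonneg_left h (by linarith)
  have b3 : η/2 * (qnorm (Pinv 0) (xs - x 0) - qnorm (Pinv 0) (xs - x N)) ≤ η * Dx^2 := by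
    have h : qnorm (Pinv 0) (xs - x 0) - qnorm (Pinv 0) (xs - x N) ≤ 2 * Dx^2 := by
      rw [hQ0]; linarith
    calc η/2 * (qnorm (Pinv 0) (xs - x 0) - qnorm (Pinv 0) (xs - x N))
        ≤ η/2 * (2 * Dx^2) := mul_le_mul_of_nonneg_left h (by linarith)
      _ = η * Dx^2 := by ring
  have hSnn : (0:ℝ) ≤ ∑ k ∈ range N, ‖x (k+1) - ν k‖^2 :=
    Finset.sum_nonneg fun k _ => by positivity
  -- regret bound
  constructor
  · have hsum := Finset.sum_le_sum (s := range N) (fun k _ => (key k).1)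
    have L1 : ∑ k ∈ range N, (f k (x k) + g (ν (k+1)) - (f k xs + g xs))
        = ((∑ k ∈ range N, (f k (x k) + g (ν k))) - ∑ k ∈ range N, (f k xs + g xs))
          + (g (ν N) - g (ν 0)) := by
      have e : ∀ k, f k (x k) + g (ν (k+1)) - (f k xs + g xs)
          = ((f k (x k) + g (ν k)) - (f k xs + g xs)) + (g (ν (k+1)) - g (ν k)) :=
        fun k => by ring
      rw [Finset.sum_congr rfl (fun k _ => e k), Finset.sum_add_distrib,
        Finset.sum_sub_distrib, Finset.sum_range_sub (fun i => g (ν i))]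
    have R1 : ∑ k ∈ range N,
        (1/(2*ρ) * (‖w k‖^2 - ‖w (k+1)‖^2)
          + ρ/2 * (‖xs - ν k‖^2 - ‖xs - ν (k+1)‖^2)
          + η/2 * (qnorm (Pinv 0) (xs - x k) - qnorm (Pinv 0) (xs - x (k+1)))
          + Gf^2/(2*η*α) - ρ/2 * ‖x (k+1) - ν k‖^2)
        = 1/(2*ρ) * (‖w 0‖^2 - ‖w N‖^2)
          + ρ/2 * (‖xs - ν 0‖^2 - ‖xs - ν N‖^2)
          + η/2 * (qnorm (Pinv 0) (xs - x 0) - qnorm (Pinv 0) (xs - x N))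
          + N * (Gf^2/(2*η*α)) - ρ/2 * ∑ k ∈ range N, ‖x (k+1) - ν k‖^2 := by
      rw [Finset.sum_sub_distrib, Finset.sum_add_distrib, Finset.sum_add_distrib,
        Finset.sum_add_distrib, T1 (1/(2*ρ)) (fun i => ‖w i‖^2),
        T1 (ρ/2) (fun i => ‖xs - ν i‖^2),
        T1 (η/2) (fun i => qnorm (Pinv 0) (xs - x i)),
        Finset.sum_const, card_range, nsmul_eq_mul, ← Finset.mul_sum]
    rw [L1, R1] at hsum
    have hgν0 : g (ν 0) = 0 := by rw [hν0, hx0, hg0]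
    have hgνN : 0 ≤ g (ν N) := hgnn (ν N)
    have hSnn' : -(ρ/2 * ∑ k ∈ range N, ‖x (k+1) - ν k‖^2) ≤ 0 := by
      have : 0 ≤ ρ/2 * ∑ k ∈ range N, ‖x (k+1) - ν k‖^2 :=
        mul_nonneg (by linarith) hSnn
      linarith
    have hbound : (∑ k ∈ range N, (f k (x k) + g (ν k))) - ∑ k ∈ range N, (f k xs + g xs)
        ≤ ρ/2 * Dν + η * Dx^2 + N * (Gf^2/(2*η*α)) := by
      linarith [hsum, b1, b2, b3, hgν0, hgνN, hSnn']
    have e1 : ρ/2 * Dν = Real.sqrt N * Dν / 2 := by rw [hρ]; ring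
    have e2 : η * Dx^2 = Gf * Real.sqrt N * Dx / Real.sqrt (2 * α) := by
      rw [hη]; field_simp
    have e3 : (N:ℝ) * (Gf^2/(2*η*α)) = Gf * Dx * Real.sqrt N / Real.sqrt (2 * α) := by
      rw [hη]
      set b := Real.sqrt (2*α) with hbd
      set s := Real.sqrt (N:ℝ) with hsd
      clear_value b s
      have hα2 : α = b^2/2 := by linarith
      rw [hα2, ← hsq]
      field_simp
    have hnum : ρ/2 * Dν + η * Dx^2 + N * (Gf^2/(2*η*α))
        = Real.sqrt N * Dν / 2 + Gf * Dx * Real.sqrt N / Real.sqrt (2 * α)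
          + Gf * Real.sqrt N * Dx / Real.sqrt (2 * α) := by
      rw [e1, e2, e3]; ring
    exact le_of_le_of_eq hbound hnum
  · have hsum := Finset.sum_le_sum (s := range N) (fun k _ => (key k).2)
    have R2 : ∑ k ∈ range N,
        (F + 1/(2*ρ) * (‖w k‖^2 - ‖w (k+1)‖^2)
          + ρ/2 * (‖xs - ν k‖^2 - ‖xs - ν (k+1)‖^2)
          + η/2 * (qnorm (Pinv 0) (xs - x k) - qnorm (Pinv 0) (xs - x (k+1))))
        = N * F + 1/(2*ρ) * (‖w 0‖^2 - ‖w N‖^2)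
          + ρ/2 * (‖xs - ν 0‖^2 - ‖xs - ν N‖^2)
          + η/2 * (qnorm (Pinv 0) (xs - x 0) - qnorm (Pinv 0) (xs - x N)) := by
      rw [Finset.sum_add_distrib, Finset.sum_add_distrib, Finset.sum_add_distrib,
        T1 (1/(2*ρ)) (fun i => ‖w i‖^2),
        T1 (ρ/2) (fun i => ‖xs - ν i‖^2),
        T1 (η/2) (fun i => qnorm (Pinv 0) (xs - x i)),
        Finset.sum_const, card_range, nsmul_eq_mul]
    have L2 : ∑ k ∈ range N, (ρ/2 * ‖x (k+1) - ν k‖^2)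
        = ρ/2 * ∑ k ∈ range N, ‖x (k+1) - ν k‖^2 := by
      rw [Finset.mul_sum]
    rw [L2, R2] at hsum
    have hbound : ρ/2 * ∑ k ∈ range N, ‖x (k+1) - ν k‖^2
        ≤ N * F + ρ/2 * Dν + η * Dx^2 := by
      linarith [hsum, b1, b2, b3]
    have hstep : ∑ k ∈ range N, ‖x (k+1) - ν k‖^2
        ≤ 2 * (N * F) / ρ + Dν + 2 * η * Dx^2 / ρ := by
      rw [div_add' _ _ _ (ne_of_gt hρ0), ← add_div, ← sub_nonneg]
      have h1 : (2 * (N * F) + Dν * ρ + 2 * η * Dx^2) / ρ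
          - ∑ k ∈ range N, ‖x (k+1) - ν k‖^2
          = (2 * (N * F + ρ/2 * Dν + η * Dx^2)
              - ρ * ∑ k ∈ range N, ‖x (k+1) - ν k‖^2) / ρ := by
        field_simp
      rw [h1]
      apply div_nonneg _ hρ0.le
      linarith [hbound]
    have e4 : 2 * ((N:ℝ) * F) / ρ = 2 * F * Real.sqrt N := by
      rw [hρ]
      field_simp
      linear_combination (-1) * hsq
    have e5 : 2 * η * Dx^2 / ρ = 2 * Gf * Dx / Real.sqrt (2 * α) := by
      rw [hρ, hη]
      field_simp
    have hnum : 2 * ((N:ℝ) * F) / ρ + Dν + 2 * η * Dx^2 / ρ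
        = 2 * F * Real.sqrt N + Dν + 2 * Gf * Dx / Real.sqrt (2 * α) := by
      rw [e4, e5]
    exact le_of_le_of_eq hstep hnum
end

section
/- Recursive batch equivalence of the Kalman filter (eq. (completecost)). Let P_{0|−1} ∈ ℝ^{n×n}, Q_i ∈ ℝ^{n×n}, R_i ∈ ℝ^{m×m} be symmetric positive definite, C_i ∈ ℝ^{m×n}, y_i ∈ ℝ^m for i = 0,…,k, and x̂_{0|−1} ∈ ℝ^n. Define recursively, for i = 0,…,k: P_{i|i} = (P_{i|i−1}⁻¹ + C_iᵀR_i⁻¹C_i)⁻¹, x̂_{i|i} = x̂_{i|i−1} + P_{i|i}C_iᵀR_i⁻¹(y_i − C_i x̂_{i|i−1}), P_{i+1|i} = P_{i|i} + Q_i, x̂_{i+1|i} = x̂_{i|i}. Then the function (x_0,…,x_{k+1}) ↦ ‖x_0 − x̂_{0|−1}‖²_{P_{0|−1}⁻¹} + Σ_{i=0}^{k} (‖y_i − C_i x_i‖²_{R_i⁻¹} + ‖x_{i+1} − x_i‖²_{Q_i⁻¹}) has a unique minimizer whose last two components equal x̂_{k|k} and x̂_{k+1|k} respectively. -/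
open Finset Matrix
open scoped RealInnerProductSpace

/-- The batch full-information cost
`(x_0,…,x_{k+1}) ↦ ‖x_0 − x̂_{0|−1}‖²_{P_{0|−1}⁻¹} + Σᵢ (‖y_i − C_i x_i‖²_{R_i⁻¹} + ‖x_{i+1} − x_i‖²_{Q_i⁻¹})`. -/
noncomputable def kalmanCost {n m : ℕ} (k : ℕ)
    (C : ℕ → Matrix (Fin m) (Fin n) ℝ) (R : ℕ → Matrix (Fin m) (Fin m) ℝ)
    (Q : ℕ → Matrix (Fin n) (Fin n) ℝ) (y : ℕ → EuclideanSpace ℝ (Fin m))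
    (P0 : Matrix (Fin n) (Fin n) ℝ) (xhat0 : EuclideanSpace ℝ (Fin n))
    (X : Fin (k + 2) → EuclideanSpace ℝ (Fin n)) : ℝ :=
  qnorm P0⁻¹ (X 0 - xhat0)
    + ∑ i : Fin (k + 1),
        (qnorm (R i)⁻¹ (y i - act (C i) (X i.castSucc))
          + qnorm (Q i)⁻¹ (X i.succ - X i.castSucc))

namespace KalmanAux
set_option linter.unusedSectionVars false
variable {d e : Type*} [Fintype d] [DecidableEq d] [Fintype e] [DecidableEq e]

noncomputable def q (M : Matrix d d ℝ) (v : d → ℝ) : ℝ := v ⬝ᵥ M *ᵥ v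

lemma swap {M : Matrix d d ℝ} (h : Mᵀ = M) (u v : d → ℝ) :
    u ⬝ᵥ M *ᵥ v = v ⬝ᵥ M *ᵥ u := by
  rw [Matrix.dotProduct_mulVec, ← Matrix.mulVec_transpose, h, dotProduct_comm]

lemma PD.symm {M : Matrix d d ℝ} (hM : M.PosDef) : Mᵀ = M := by
  have h : M.IsSymm := by simpa using hM.isHermitian
  exact h

lemma q_nonneg {M : Matrix d d ℝ} (hM : M.PosDef) (v : d → ℝ) : 0 ≤ q M v := by
  simpa [q] using hM.posSemidef.dotProduct_mulVec_nonneg v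

lemma q_eq_zero_iff {M : Matrix d d ℝ} (hM : M.PosDef) {v : d → ℝ} :
    q M v = 0 ↔ v = 0 := by
  constructor
  · intro h
    by_contra hv
    exact absurd h (ne_of_gt (by simpa [q] using hM.dotProduct_mulVec_pos hv))
  · intro h; simp [h, q]

lemma q_sub {M : Matrix d d ℝ} (hM : Mᵀ = M) (u v : d → ℝ) :
    q M (u - v) = q M u - 2 * (u ⬝ᵥ M *ᵥ v) + q M v := by
  simp only [q, Matrix.mulVec_sub, dotProduct_sub, sub_dotProduct]
  rw [swap hM v u]; ring

lemma dot_mul_left (Cm : Matrix e d ℝ) (u : d → ℝ) (z : e → ℝ) :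
    (Cm *ᵥ u) ⬝ᵥ z = u ⬝ᵥ (Cmᵀ *ᵥ z) := by
  rw [dotProduct_comm, Matrix.dotProduct_mulVec, ← Matrix.mulVec_transpose, dotProduct_comm]

lemma mulVec_dot {A P : Matrix d d ℝ} (hA : Aᵀ = A) (a v : d → ℝ) :
    (A *ᵥ a) ⬝ᵥ (P *ᵥ v) = a ⬝ᵥ ((A * P) *ᵥ v) := by
  rw [← Matrix.mulVec_mulVec, swap hA a (P *ᵥ v), dotProduct_comm]

lemma inv_add_inv_inv {A B : Matrix d d ℝ} (hA : A.PosDef) (hB : B.PosDef) :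
    (A⁻¹ + B⁻¹)⁻¹ = B * (A + B)⁻¹ * A := by
  have hAd : IsUnit A.det := (Matrix.isUnit_iff_isUnit_det _).1 hA.isUnit
  have hBd : IsUnit B.det := (Matrix.isUnit_iff_isUnit_det _).1 hB.isUnit
  have h1 : A⁻¹ + B⁻¹ = A⁻¹ * (A + B) * B⁻¹ := by
    rw [Matrix.mul_add, Matrix.add_mul, Matrix.nonsing_inv_mul _ hAd,
      Matrix.mul_nonsing_inv_cancel_right _ _ hBd, Matrix.one_mul, add_comm]
  rw [h1, Matrix.mul_inv_rev, Matrix.mul_inv_rev, Matrix.nonsing_inv_nonsing_inv _ hAd,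
    Matrix.nonsing_inv_nonsing_inv _ hBd, Matrix.mul_assoc]

lemma S_eq {A B : Matrix d d ℝ} (hA : A.PosDef) (hB : B.PosDef) :
    (A⁻¹ + B⁻¹)⁻¹ = A * (A + B)⁻¹ * B := by
  rw [add_comm A⁻¹, inv_add_inv_inv hB hA, add_comm B]

lemma sandwich_left {A B : Matrix d d ℝ} (hA : A.PosDef) (hB : B.PosDef) :
    A * (A + B)⁻¹ * A = A - (A⁻¹ + B⁻¹)⁻¹ := by
  have hMd : IsUnit (A + B).det := (Matrix.isUnit_iff_isUnit_det _).1 (hA.add hB).isUnit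
  have h : A * (A + B)⁻¹ * A + A * (A + B)⁻¹ * B = A := by
    rw [Matrix.mul_assoc, Matrix.mul_assoc, ← Matrix.mul_add, ← Matrix.mul_add,
      Matrix.nonsing_inv_mul _ hMd, Matrix.mul_one]
  rw [S_eq hA hB, eq_sub_iff_add_eq, h]

lemma sandwich_right {A B : Matrix d d ℝ} (hA : A.PosDef) (hB : B.PosDef) :
    B * (A + B)⁻¹ * B = B - (A⁻¹ + B⁻¹)⁻¹ := by
  rw [add_comm A B, add_comm A⁻¹ B⁻¹]
  exact sandwich_left hB hA

lemma S_symm {A B : Matrix d d ℝ} (hA : A.PosDef) (hB : B.PosDef) :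
    ((A⁻¹ + B⁻¹)⁻¹)ᵀ = (A⁻¹ + B⁻¹)⁻¹ :=
  PD.symm (hA.inv.add hB.inv).inv

lemma key_vec {A B : Matrix d d ℝ} (hA : A.PosDef) (hB : B.PosDef) (a x : d → ℝ) :
    q A a + q B x - (A *ᵥ a + B *ᵥ x) ⬝ᵥ (A + B)⁻¹ *ᵥ (A *ᵥ a + B *ᵥ x)
      = q ((A⁻¹ + B⁻¹)⁻¹) (x - a) := by
  set S := (A⁻¹ + B⁻¹)⁻¹ with hSdef
  have e1 : (A *ᵥ a) ⬝ᵥ ((A + B)⁻¹ *ᵥ (A *ᵥ a)) = q A a - a ⬝ᵥ S *ᵥ a := by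
    rw [mulVec_dot (PD.symm hA), Matrix.mulVec_mulVec, sandwich_left hA hB,
      Matrix.sub_mulVec, dotProduct_sub, q]
  have e2 : (A *ᵥ a) ⬝ᵥ ((A + B)⁻¹ *ᵥ (B *ᵥ x)) = a ⬝ᵥ S *ᵥ x := by
    rw [mulVec_dot (PD.symm hA), Matrix.mulVec_mulVec, ← S_eq hA hB]
  have e3 : (B *ᵥ x) ⬝ᵥ ((A + B)⁻¹ *ᵥ (A *ᵥ a)) = a ⬝ᵥ S *ᵥ x := by
    rw [mulVec_dot (PD.symm hB), Matrix.mulVec_mulVec, ← inv_add_inv_inv hA hB,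
      swap (S_symm hA hB)]
  have e4 : (B *ᵥ x) ⬝ᵥ ((A + B)⁻¹ *ᵥ (B *ᵥ x)) = q B x - x ⬝ᵥ S *ᵥ x := by
    rw [mulVec_dot (PD.symm hB), Matrix.mulVec_mulVec, sandwich_right hA hB,
      Matrix.sub_mulVec, dotProduct_sub, q]
  rw [q_sub (S_symm hA hB), swap (S_symm hA hB) x a]
  simp only [Matrix.mulVec_add, dotProduct_add, add_dotProduct, e1, e2, e3, e4, q]
  ring

/-- inf-convolution of two quadratics: completing the square. -/
lemma infconv {A B : Matrix d d ℝ} (hA : A.PosDef) (hB : B.PosDef) (a x z : d → ℝ) :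
    q A (z - a) + q B (x - z)
      = q (A + B) (z - (A + B)⁻¹ *ᵥ (A *ᵥ a + B *ᵥ x)) + q ((A⁻¹ + B⁻¹)⁻¹) (x - a) := by
  have hM : (A + B).PosDef := hA.add hB
  have hMd : IsUnit (A + B).det := (Matrix.isUnit_iff_isUnit_det _).1 hM.isUnit
  set b := A *ᵥ a + B *ᵥ x with hbdef
  have hMb : (A + B) *ᵥ ((A + B)⁻¹ *ᵥ b) = b := by
    rw [Matrix.mulVec_mulVec, Matrix.mul_nonsing_inv _ hMd, Matrix.one_mulVec]
  have hqm : q (A + B) ((A + B)⁻¹ *ᵥ b) = b ⬝ᵥ (A + B)⁻¹ *ᵥ b := by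
    rw [q, hMb, dotProduct_comm, swap (PD.symm hM.inv)]
  have hkey := key_vec hA hB a x
  rw [q_sub (PD.symm hA), q_sub (PD.symm hB), q_sub (PD.symm hM), hqm]
  have hz1 : z ⬝ᵥ (A + B) *ᵥ ((A + B)⁻¹ *ᵥ b) = z ⬝ᵥ A *ᵥ a + z ⬝ᵥ B *ᵥ x := by
    rw [hMb, hbdef, dotProduct_add]
  have hz2 : q (A + B) z = q A z + q B z := by
    simp [q, Matrix.add_mulVec, dotProduct_add]
  have hz3 : x ⬝ᵥ B *ᵥ z = z ⬝ᵥ B *ᵥ x := swap (PD.symm hB) x z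
  rw [hz1, hz2, hz3]
  linarith [hkey]

/-- measurement-update completion of squares. -/
lemma meas {P H : Matrix d d ℝ} {G : Matrix e e ℝ} {Cm : Matrix e d ℝ}
    (hP : Pᵀ = P) (hG : Gᵀ = G) (hH : Hᵀ = H)
    (hHsum : H = P + Cmᵀ * G * Cm) {s t : d → ℝ} {yv : e → ℝ}
    (ht : H *ᵥ t = P *ᵥ s + (Cmᵀ * G) *ᵥ yv) (u : d → ℝ) :
    q P (u - s) + q G (yv - Cm *ᵥ u)
      = q H (u - t) + (q P s + q G yv - q H t) := by
  have e1 : q G (Cm *ᵥ u) = u ⬝ᵥ (Cmᵀ * G * Cm) *ᵥ u := by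
    rw [q, dot_mul_left, Matrix.mulVec_mulVec, Matrix.mulVec_mulVec]
  have e2 : yv ⬝ᵥ G *ᵥ (Cm *ᵥ u) = u ⬝ᵥ (Cmᵀ * G) *ᵥ yv := by
    rw [swap hG, dot_mul_left, Matrix.mulVec_mulVec]
  have e3 : q H u = u ⬝ᵥ P *ᵥ u + u ⬝ᵥ (Cmᵀ * G * Cm) *ᵥ u := by
    rw [q, hHsum, Matrix.add_mulVec, dotProduct_add]
  have e4 : u ⬝ᵥ H *ᵥ t = u ⬝ᵥ P *ᵥ s + u ⬝ᵥ (Cmᵀ * G) *ᵥ yv := by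
    rw [ht, dotProduct_add]
  rw [q_sub hP, q_sub hG, q_sub hH, e1, e2, e3, e4]
  simp only [q]
  ring


lemma qnorm_eq {ι : Type*} [Fintype ι] (M : Matrix ι ι ℝ) (v : EuclideanSpace ℝ ι) :
    qnorm M v = q M v := by
  unfold qnorm act q
  rw [PiLp.inner_apply]
  simp [dotProduct, mul_comm]

lemma act_eq {ι κ : Type*} [Fintype ι] [Fintype κ] (A : Matrix ι κ ℝ)
    (v : EuclideanSpace ℝ κ) : act A v = A.mulVec v := rfl

lemma q_zero {d : Type*} [Fintype d] (M : Matrix d d ℝ) : q M (0 : d → ℝ) = 0 := by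
  simp [q]

/-- partial cost up to the `j`-th prediction stage. -/
noncomputable def Gcost {n m : ℕ}
    (C : ℕ → Matrix (Fin m) (Fin n) ℝ) (R : ℕ → Matrix (Fin m) (Fin m) ℝ)
    (Q : ℕ → Matrix (Fin n) (Fin n) ℝ) (y : ℕ → EuclideanSpace ℝ (Fin m))
    (P0 : Matrix (Fin n) (Fin n) ℝ) (x0 : EuclideanSpace ℝ (Fin n))
    (j : ℕ) (Z : Fin (j + 1) → EuclideanSpace ℝ (Fin n)) : ℝ :=
  qnorm P0⁻¹ (Z 0 - x0)
    + ∑ i : Fin j,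
        (qnorm (R i)⁻¹ (y i - act (C i) (Z i.castSucc))
          + qnorm (Q i)⁻¹ (Z i.succ - Z i.castSucc))

lemma kalman_eq_Gcost {n m : ℕ} (k : ℕ)
    (C : ℕ → Matrix (Fin m) (Fin n) ℝ) (R : ℕ → Matrix (Fin m) (Fin m) ℝ)
    (Q : ℕ → Matrix (Fin n) (Fin n) ℝ) (y : ℕ → EuclideanSpace ℝ (Fin m))
    (P0 : Matrix (Fin n) (Fin n) ℝ) (x0 : EuclideanSpace ℝ (Fin n))
    (X : Fin (k + 2) → EuclideanSpace ℝ (Fin n)) :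
    kalmanCost k C R Q y P0 x0 X = Gcost C R Q y P0 x0 (k + 1) X := rfl

lemma Gcost_succ {n m : ℕ}
    (C : ℕ → Matrix (Fin m) (Fin n) ℝ) (R : ℕ → Matrix (Fin m) (Fin m) ℝ)
    (Q : ℕ → Matrix (Fin n) (Fin n) ℝ) (y : ℕ → EuclideanSpace ℝ (Fin m))
    (P0 : Matrix (Fin n) (Fin n) ℝ) (x0 : EuclideanSpace ℝ (Fin n))
    (j : ℕ) (Z : Fin (j + 2) → EuclideanSpace ℝ (Fin n)) :
    Gcost C R Q y P0 x0 (j + 1) Z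
      = Gcost C R Q y P0 x0 j (fun i : Fin (j + 1) => Z i.castSucc)
        + (qnorm (R j)⁻¹ (y j - act (C j) (Z (Fin.castSucc (Fin.last j))))
          + qnorm (Q j)⁻¹ (Z (Fin.last (j + 1)) - Z (Fin.castSucc (Fin.last j)))) := by
  unfold Gcost
  rw [Fin.sum_univ_castSucc]
  simp only [Fin.coe_castSucc, Fin.succ_castSucc, Fin.val_last, Fin.succ_last,
    Fin.castSucc_zero]
  ring

section Step

variable {n m : ℕ}
  (C : ℕ → Matrix (Fin m) (Fin n) ℝ) (R : ℕ → Matrix (Fin m) (Fin m) ℝ)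
  (Q : ℕ → Matrix (Fin n) (Fin n) ℝ) (y : ℕ → EuclideanSpace ℝ (Fin m))
  (Pp Pf : ℕ → Matrix (Fin n) (Fin n) ℝ)
  (xp xf : ℕ → EuclideanSpace ℝ (Fin n))

lemma step
    (hR : ∀ i, (R i).PosDef) (hQ : ∀ i, (Q i).PosDef)
    (hPf : ∀ i, Pf i = ((Pp i)⁻¹ + (C i)ᵀ * (R i)⁻¹ * C i)⁻¹)
    (hxf : ∀ i, xf i = xp i + act (Pf i * (C i)ᵀ * (R i)⁻¹) (y i - act (C i) (xp i)))
    (hPp : ∀ i, Pp (i + 1) = Pf i + Q i) (hxp : ∀ i, xp (i + 1) = xf i)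
    (j : ℕ) (hPD : (Pp j).PosDef) (c : ℝ)
    (hlb : ∀ Z : Fin (j + 1) → EuclideanSpace ℝ (Fin n),
      c + q (Pp j)⁻¹ (Z (Fin.last j) - xp j) ≤ Gcost C R Q y (Pp 0) (xp 0) j Z)
    (hatt : ∀ x : EuclideanSpace ℝ (Fin n), ∃ Z : Fin (j + 1) → EuclideanSpace ℝ (Fin n),
      Z (Fin.last j) = x ∧ Gcost C R Q y (Pp 0) (xp 0) j Z = c + q (Pp j)⁻¹ (x - xp j))
    (huniq : ∀ Z W : Fin (j + 1) → EuclideanSpace ℝ (Fin n),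
      Gcost C R Q y (Pp 0) (xp 0) j Z = c + q (Pp j)⁻¹ (Z (Fin.last j) - xp j) →
      Gcost C R Q y (Pp 0) (xp 0) j W = c + q (Pp j)⁻¹ (W (Fin.last j) - xp j) →
      W (Fin.last j) = Z (Fin.last j) → W = Z) :
    (Pp (j + 1)).PosDef ∧ ∃ c' : ℝ,
      (∀ Z : Fin (j + 2) → EuclideanSpace ℝ (Fin n),
        c' + q (Pp (j + 1))⁻¹ (Z (Fin.last (j + 1)) - xp (j + 1))
          ≤ Gcost C R Q y (Pp 0) (xp 0) (j + 1) Z) ∧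
      (∀ x : EuclideanSpace ℝ (Fin n), ∃ Z : Fin (j + 2) → EuclideanSpace ℝ (Fin n),
        Z (Fin.last (j + 1)) = x ∧
        Gcost C R Q y (Pp 0) (xp 0) (j + 1) Z = c' + q (Pp (j + 1))⁻¹ (x - xp (j + 1))) ∧
      (∀ Z W : Fin (j + 2) → EuclideanSpace ℝ (Fin n),
        Gcost C R Q y (Pp 0) (xp 0) (j + 1) Z
          = c' + q (Pp (j + 1))⁻¹ (Z (Fin.last (j + 1)) - xp (j + 1)) →
        Gcost C R Q y (Pp 0) (xp 0) (j + 1) W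
          = c' + q (Pp (j + 1))⁻¹ (W (Fin.last (j + 1)) - xp (j + 1)) →
        W (Fin.last (j + 1)) = Z (Fin.last (j + 1)) → W = Z) ∧
      (∃ Z : Fin (j + 2) → EuclideanSpace ℝ (Fin n),
        Z (Fin.last (j + 1)) = xp (j + 1) ∧ Z (Fin.castSucc (Fin.last j)) = xf j ∧
        Gcost C R Q y (Pp 0) (xp 0) (j + 1) Z = c') := by
  -- positive definiteness bookkeeping
  have hCRC : ((C j)ᵀ * (R j)⁻¹ * C j).PosSemidef := by
    have h := (hR j).inv.posSemidef.conjTranspose_mul_mul_same (C j)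
    simpa [Matrix.conjTranspose_eq_transpose_of_trivial] using h
  have hInner : ((Pp j)⁻¹ + (C j)ᵀ * (R j)⁻¹ * C j).PosDef := hPD.inv.add_posSemidef hCRC
  have hPfPD : (Pf j).PosDef := by rw [hPf j]; exact hInner.inv
  have hPfinv : (Pf j)⁻¹ = (Pp j)⁻¹ + (C j)ᵀ * (R j)⁻¹ * C j := by
    rw [hPf j,
      Matrix.nonsing_inv_nonsing_inv _ ((Matrix.isUnit_iff_isUnit_det _).1 hInner.isUnit)]
  have hPp1PD : (Pp (j + 1)).PosDef := by rw [hPp j]; exact hPfPD.add (hQ j)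
  have hPfd : IsUnit (Pf j).det := (Matrix.isUnit_iff_isUnit_det _).1 hPfPD.isUnit
  -- the linear identity for the filtered estimate
  have ht : (Pf j)⁻¹ *ᵥ xf j = (Pp j)⁻¹ *ᵥ xp j + ((C j)ᵀ * (R j)⁻¹) *ᵥ y j := by
    have e1 : (Pf j)⁻¹ *ᵥ xf j
        = (Pf j)⁻¹ *ᵥ xp j
          + (Pf j)⁻¹ *ᵥ ((Pf j * (C j)ᵀ * (R j)⁻¹) *ᵥ (y j - act (C j) (xp j))) := by
      rw [hxf j]
      exact Matrix.mulVec_add _ _ _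
    have e2 : (Pf j)⁻¹ *ᵥ ((Pf j * (C j)ᵀ * (R j)⁻¹) *ᵥ (y j - act (C j) (xp j)))
        = ((C j)ᵀ * (R j)⁻¹) *ᵥ (y j - act (C j) (xp j)) := by
      rw [Matrix.mulVec_mulVec, Matrix.mul_assoc (Pf j) ((C j)ᵀ) ((R j)⁻¹),
        Matrix.nonsing_inv_mul_cancel_left _ _ hPfd]
    have e3 : ((C j)ᵀ * (R j)⁻¹) *ᵥ (y j - act (C j) (xp j))
        = ((C j)ᵀ * (R j)⁻¹) *ᵥ y j - ((C j)ᵀ * (R j)⁻¹ * C j) *ᵥ xp j := by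
      rw [show ((C j)ᵀ * (R j)⁻¹) *ᵥ (y j - act (C j) (xp j))
          = ((C j)ᵀ * (R j)⁻¹) *ᵥ y j - ((C j)ᵀ * (R j)⁻¹) *ᵥ ((C j) *ᵥ xp j)
        from Matrix.mulVec_sub _ _ _, Matrix.mulVec_mulVec]
    have e4 : (Pf j)⁻¹ *ᵥ xp j
        = (Pp j)⁻¹ *ᵥ xp j + ((C j)ᵀ * (R j)⁻¹ * C j) *ᵥ xp j := by
      rw [hPfinv]
      exact Matrix.add_mulVec _ _ _
    rw [e1, e2, e3, e4]
    abel
  -- measurement update: completing the square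
  set dtot : ℝ := q (Pp j)⁻¹ (xp j : Fin n → ℝ) + q (R j)⁻¹ (y j : Fin m → ℝ)
      - q (Pf j)⁻¹ (xf j : Fin n → ℝ) with hdtot
  have hmeas : ∀ u : EuclideanSpace ℝ (Fin n),
      q (Pp j)⁻¹ (u - xp j) + q (R j)⁻¹ (y j - act (C j) u)
        = q (Pf j)⁻¹ (u - xf j) + dtot := by
    intro u
    exact meas (PD.symm hPD.inv) (PD.symm (hR j).inv) (PD.symm hPfPD.inv) hPfinv ht u
  -- prediction update: inf-convolution of quadratics
  have hMPD : ((Pf j)⁻¹ + (Q j)⁻¹).PosDef := hPfPD.inv.add (hQ j).inv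
  have hMd : IsUnit ((Pf j)⁻¹ + (Q j)⁻¹).det :=
    (Matrix.isUnit_iff_isUnit_det _).1 hMPD.isUnit
  have hinv2 : (((Pf j)⁻¹⁻¹ + ((Q j)⁻¹)⁻¹))⁻¹ = (Pp (j + 1))⁻¹ := by
    rw [Matrix.nonsing_inv_nonsing_inv _ hPfd,
      Matrix.nonsing_inv_nonsing_inv _ ((Matrix.isUnit_iff_isUnit_det _).1 (hQ j).isUnit),
      ← hPp j]
  set g : EuclideanSpace ℝ (Fin n) → EuclideanSpace ℝ (Fin n) := fun x =>
    WithLp.toLp 2 (((Pf j)⁻¹ + (Q j)⁻¹)⁻¹ *ᵥ ((Pf j)⁻¹ *ᵥ (xf j : Fin n → ℝ) + (Q j)⁻¹ *ᵥ (x : Fin n → ℝ))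
      : Fin n → ℝ) with hg
  have hconv : ∀ x z : EuclideanSpace ℝ (Fin n),
      q (Pf j)⁻¹ (z - xf j) + q (Q j)⁻¹ (x - z)
        = q ((Pf j)⁻¹ + (Q j)⁻¹) (z - g x) + q (Pp (j + 1))⁻¹ (x - xf j) := by
    intro x z
    have h := infconv hPfPD.inv (hQ j).inv (xf j : Fin n → ℝ) x z
    rw [hinv2] at h
    exact h
  have hgfix : g (xf j) = xf j := by
    show WithLp.toLp 2 (((Pf j)⁻¹ + (Q j)⁻¹)⁻¹ *ᵥ ((Pf j)⁻¹ *ᵥ (xf j : Fin n → ℝ)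
        + (Q j)⁻¹ *ᵥ (xf j : Fin n → ℝ)) : Fin n → ℝ) = xf j
    rw [← Matrix.add_mulVec, Matrix.mulVec_mulVec, Matrix.nonsing_inv_mul _ hMd,
      Matrix.one_mulVec, WithLp.toLp_ofLp]
  refine ⟨hPp1PD, c + dtot, ?_, ?_, ?_, ?_⟩
  · -- lower bound
    intro Z
    rw [Gcost_succ]
    have h1 : c + q (Pp j)⁻¹ (Z (Fin.castSucc (Fin.last j)) - xp j)
        ≤ Gcost C R Q y (Pp 0) (xp 0) j (fun i : Fin (j + 1) => Z i.castSucc) :=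
      hlb (fun i : Fin (j + 1) => Z i.castSucc)
    have h2 := hmeas (Z (Fin.castSucc (Fin.last j)))
    have h3 := hconv (Z (Fin.last (j + 1))) (Z (Fin.castSucc (Fin.last j)))
    have h4 : (0:ℝ) ≤ q ((Pf j)⁻¹ + (Q j)⁻¹)
        (Z (Fin.castSucc (Fin.last j)) - g (Z (Fin.last (j + 1)))) :=
      q_nonneg hMPD _
    rw [qnorm_eq, qnorm_eq, hxp j]
    simp only [WithLp.ofLp_sub] at *
    linarith [h1, h2, h3, h4]
  · -- attainment
    intro x
    obtain ⟨Z0, hZ0l, hZ0v⟩ := hatt (g x)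
    refine ⟨Fin.snoc Z0 x, Fin.snoc_last _ _, ?_⟩
    have hcs : (fun i : Fin (j + 1) => (Fin.snoc Z0 x : Fin (j + 2) → EuclideanSpace ℝ (Fin n)) (Fin.castSucc i)) = Z0 := by
      funext i; simp
    rw [Gcost_succ, hcs, hZ0v, Fin.snoc_last, Fin.snoc_castSucc, hZ0l, qnorm_eq, qnorm_eq]
    have h2 := hmeas (g x)
    have h3 := hconv x (g x)
    have h5 : q ((Pf j)⁻¹ + (Q j)⁻¹) (g x - g x) = 0 := by
      rw [sub_self]; exact q_zero _
    rw [hxp j]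
    simp only [WithLp.ofLp_sub] at *
    linarith [h2, h3, h5]
  · -- uniqueness
    intro Z W hZ hW hlast
    have key : ∀ T : Fin (j + 2) → EuclideanSpace ℝ (Fin n),
        Gcost C R Q y (Pp 0) (xp 0) (j + 1) T
          = c + dtot + q (Pp (j + 1))⁻¹ (T (Fin.last (j + 1)) - xp (j + 1)) →
        T (Fin.castSucc (Fin.last j)) = g (T (Fin.last (j + 1))) ∧
        Gcost C R Q y (Pp 0) (xp 0) j (fun i : Fin (j + 1) => T i.castSucc)
          = c + q (Pp j)⁻¹ (T (Fin.castSucc (Fin.last j)) - xp j) := by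
      intro T hT
      rw [Gcost_succ, qnorm_eq, qnorm_eq] at hT
      have h1 : c + q (Pp j)⁻¹ (T (Fin.castSucc (Fin.last j)) - xp j)
          ≤ Gcost C R Q y (Pp 0) (xp 0) j (fun i : Fin (j + 1) => T i.castSucc) :=
        hlb (fun i : Fin (j + 1) => T i.castSucc)
      have h2 := hmeas (T (Fin.castSucc (Fin.last j)))
      have h3 := hconv (T (Fin.last (j + 1))) (T (Fin.castSucc (Fin.last j)))
      have h4 : (0:ℝ) ≤ q ((Pf j)⁻¹ + (Q j)⁻¹)
          (T (Fin.castSucc (Fin.last j)) - g (T (Fin.last (j + 1)))) :=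
        q_nonneg hMPD _
      rw [hxp j] at hT
      have hq0 : q ((Pf j)⁻¹ + (Q j)⁻¹)
          (T (Fin.castSucc (Fin.last j)) - g (T (Fin.last (j + 1)))) = 0 := by
        simp only [WithLp.ofLp_sub] at *
        linarith [h1, h2, h3, h4, hT]
      have hTg : T (Fin.castSucc (Fin.last j)) = g (T (Fin.last (j + 1))) := by
        have := (q_eq_zero_iff hMPD).1 hq0
        exact sub_eq_zero.1 ((WithLp.ofLp_eq_zero 2).1 this)
      refine ⟨hTg, ?_⟩
      simp only [WithLp.ofLp_sub] at *
      linarith [h1, h2, h3, hq0, hT]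
    obtain ⟨hZg, hZv⟩ := key Z hZ
    obtain ⟨hWg, hWv⟩ := key W hW
    have hsame : W (Fin.castSucc (Fin.last j)) = Z (Fin.castSucc (Fin.last j)) := by
      rw [hZg, hWg, hlast]
    have hfun : (fun i : Fin (j + 1) => W i.castSucc) = (fun i : Fin (j + 1) => Z i.castSucc) := by
      apply huniq _ _ hZv _ hsame
      rw [hWv, hsame]
    funext i
    refine Fin.lastCases ?_ ?_ i
    · exact hlast
    · intro i'
      exact congrFun hfun i'
  · -- distinguished minimizer
    obtain ⟨Z0, hZ0l, hZ0v⟩ := hatt (xf j)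
    refine ⟨Fin.snoc Z0 (xp (j + 1)), Fin.snoc_last _ _, ?_, ?_⟩
    · rw [Fin.snoc_castSucc, hZ0l]
    have hcs : (fun i : Fin (j + 1) => (Fin.snoc Z0 (xp (j + 1)) : Fin (j + 2) → EuclideanSpace ℝ (Fin n)) (Fin.castSucc i)) = Z0 := by
      funext i; simp
    rw [Gcost_succ, hcs, hZ0v, Fin.snoc_last, Fin.snoc_castSucc, hZ0l, qnorm_eq, qnorm_eq,
      hxp j]
    have h2 := hmeas (xf j)
    have h5 : q (Pf j)⁻¹ ((xf j : EuclideanSpace ℝ (Fin n)) - xf j) = 0 := by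
      rw [sub_self]; exact q_zero _
    have h6 : q (Q j)⁻¹ ((xf j : EuclideanSpace ℝ (Fin n)) - xf j) = 0 := by
      rw [sub_self]; exact q_zero _
    simp only [WithLp.ofLp_sub] at *
    linarith [h2, h5, h6]

end Step

lemma main_ind {n m : ℕ}
    (C : ℕ → Matrix (Fin m) (Fin n) ℝ) (R : ℕ → Matrix (Fin m) (Fin m) ℝ)
    (Q : ℕ → Matrix (Fin n) (Fin n) ℝ) (y : ℕ → EuclideanSpace ℝ (Fin m))
    (Pp Pf : ℕ → Matrix (Fin n) (Fin n) ℝ)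
    (xp xf : ℕ → EuclideanSpace ℝ (Fin n))
    (hR : ∀ i, (R i).PosDef) (hQ : ∀ i, (Q i).PosDef) (hP0 : (Pp 0).PosDef)
    (hPf : ∀ i, Pf i = ((Pp i)⁻¹ + (C i)ᵀ * (R i)⁻¹ * C i)⁻¹)
    (hxf : ∀ i, xf i = xp i + act (Pf i * (C i)ᵀ * (R i)⁻¹) (y i - act (C i) (xp i)))
    (hPp : ∀ i, Pp (i + 1) = Pf i + Q i) (hxp : ∀ i, xp (i + 1) = xf i) :
    ∀ j, (Pp j).PosDef ∧ ∃ c : ℝ,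
      (∀ Z : Fin (j + 1) → EuclideanSpace ℝ (Fin n),
        c + q (Pp j)⁻¹ (Z (Fin.last j) - xp j) ≤ Gcost C R Q y (Pp 0) (xp 0) j Z) ∧
      (∀ x : EuclideanSpace ℝ (Fin n), ∃ Z : Fin (j + 1) → EuclideanSpace ℝ (Fin n),
        Z (Fin.last j) = x ∧
        Gcost C R Q y (Pp 0) (xp 0) j Z = c + q (Pp j)⁻¹ (x - xp j)) ∧
      (∀ Z W : Fin (j + 1) → EuclideanSpace ℝ (Fin n),
        Gcost C R Q y (Pp 0) (xp 0) j Z = c + q (Pp j)⁻¹ (Z (Fin.last j) - xp j) →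
        Gcost C R Q y (Pp 0) (xp 0) j W = c + q (Pp j)⁻¹ (W (Fin.last j) - xp j) →
        W (Fin.last j) = Z (Fin.last j) → W = Z) := by
  intro j
  induction j with
  | zero =>
    have hG0 : ∀ Z : Fin 1 → EuclideanSpace ℝ (Fin n),
        Gcost C R Q y (Pp 0) (xp 0) 0 Z = q (Pp 0)⁻¹ (Z (Fin.last 0) - xp 0) := by
      intro Z
      show qnorm (Pp 0)⁻¹ (Z 0 - xp 0) + ∑ i : Fin 0, _ = _
      rw [qnorm_eq]
      simp
    refine ⟨hP0, 0, ?_, ?_, ?_⟩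
    · intro Z; rw [hG0 Z, zero_add]
    · intro x
      exact ⟨fun _ => x, rfl, by rw [hG0, zero_add]⟩
    · intro Z W _ _ hl
      funext i
      have hi : i = Fin.last 0 := by
        apply Fin.ext
        have := i.is_lt
        simp only [Fin.val_last]
        omega
      rw [hi]; exact hl
  | succ j ih =>
    obtain ⟨hPD, c, hlb, hatt, huniq⟩ := ih
    obtain ⟨h1, c', h2, h3, h4, -⟩ :=
      step C R Q y Pp Pf xp xf hR hQ hPf hxf hPp hxp j hPD c hlb hatt huniq
    exact ⟨h1, c', h2, h3, h4⟩

end KalmanAux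


/-- Recursive batch equivalence of the Kalman filter: the batch cost has a unique minimizer
whose last two components are the filtered estimate `x̂_{k|k}` and the one-step-ahead
prediction `x̂_{k+1|k}` produced by the Kalman recursion. -/
theorem kalman_batch_equivalence {n m : ℕ} (k : ℕ)
    (C : ℕ → Matrix (Fin m) (Fin n) ℝ) (R : ℕ → Matrix (Fin m) (Fin m) ℝ)
    (Q : ℕ → Matrix (Fin n) (Fin n) ℝ) (y : ℕ → EuclideanSpace ℝ (Fin m))
    (hR : ∀ i, (R i).PosDef) (hQ : ∀ i, (Q i).PosDef)
    -- predicted/filtered covariances and estimates (`Pp 0 = P_{0|−1}`, `xp 0 = x̂_{0|−1}`)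
    (Pp Pf : ℕ → Matrix (Fin n) (Fin n) ℝ)
    (xp xf : ℕ → EuclideanSpace ℝ (Fin n))
    (hP0 : (Pp 0).PosDef)
    (hPf : ∀ i, Pf i = ((Pp i)⁻¹ + (C i)ᵀ * (R i)⁻¹ * C i)⁻¹)
    (hxf : ∀ i, xf i = xp i + act (Pf i * (C i)ᵀ * (R i)⁻¹) (y i - act (C i) (xp i)))
    (hPp : ∀ i, Pp (i + 1) = Pf i + Q i)
    (hxp : ∀ i, xp (i + 1) = xf i) :
    ∃ X : Fin (k + 2) → EuclideanSpace ℝ (Fin n),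
      (∀ Z, kalmanCost k C R Q y (Pp 0) (xp 0) X ≤ kalmanCost k C R Q y (Pp 0) (xp 0) Z) ∧
      (∀ Z, (∀ W, kalmanCost k C R Q y (Pp 0) (xp 0) Z ≤ kalmanCost k C R Q y (Pp 0) (xp 0) W)
        → Z = X) ∧
      X (Fin.castSucc (Fin.last k)) = xf k ∧
      X (Fin.last (k + 1)) = xp (k + 1) := by
  classical
  obtain ⟨hPD, c, hlb, hatt, huniq⟩ :=
    KalmanAux.main_ind C R Q y Pp Pf xp xf hR hQ hP0 hPf hxf hPp hxp k
  obtain ⟨hPD1, c', hlb1, hatt1, huniq1, W, hWl, hWc, hWv⟩ :=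
    KalmanAux.step C R Q y Pp Pf xp xf hR hQ hPf hxf hPp hxp k hPD c hlb hatt huniq
  have hq0 : KalmanAux.q (Pp (k + 1))⁻¹
      ((W (Fin.last (k + 1)) : EuclideanSpace ℝ (Fin n)) - xp (k + 1)) = 0 := by
    rw [hWl, sub_self]; exact KalmanAux.q_zero _
  have hWachieve : KalmanAux.Gcost C R Q y (Pp 0) (xp 0) (k + 1) W
      = c' + KalmanAux.q (Pp (k + 1))⁻¹ (W (Fin.last (k + 1)) - xp (k + 1)) := by
    rw [hq0, hWv, add_zero]
  refine ⟨W, ?_, ?_, hWc, hWl⟩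
  · intro Z
    rw [KalmanAux.kalman_eq_Gcost, KalmanAux.kalman_eq_Gcost, hWv]
    have h1 := hlb1 Z
    have h2 := KalmanAux.q_nonneg hPD1.inv
      ((Z (Fin.last (k + 1)) : EuclideanSpace ℝ (Fin n)) - xp (k + 1))
    linarith
  · intro Z hZmin
    have hZW : KalmanAux.Gcost C R Q y (Pp 0) (xp 0) (k + 1) Z ≤ c' := by
      have := hZmin W
      rwa [KalmanAux.kalman_eq_Gcost, KalmanAux.kalman_eq_Gcost, hWv] at this
    have h1 := hlb1 Z
    have h2 := KalmanAux.q_nonneg hPD1.inv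
      ((Z (Fin.last (k + 1)) : EuclideanSpace ℝ (Fin n)) - xp (k + 1))
    have hqZ : KalmanAux.q (Pp (k + 1))⁻¹
        ((Z (Fin.last (k + 1)) : EuclideanSpace ℝ (Fin n)) - xp (k + 1)) = 0 := by
      linarith
    have hZl : Z (Fin.last (k + 1)) = xp (k + 1) :=
      sub_eq_zero.1 ((WithLp.ofLp_eq_zero 2).1 ((KalmanAux.q_eq_zero_iff hPD1.inv).1 hqZ))
    have hZach : KalmanAux.Gcost C R Q y (Pp 0) (xp 0) (k + 1) Z
        = c' + KalmanAux.q (Pp (k + 1))⁻¹ (Z (Fin.last (k + 1)) - xp (k + 1)) := by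
      rw [hqZ, add_zero]
      linarith
    exact huniq1 W Z hWachieve hZach (by rw [hZl, hWl])
end
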